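/- Let p₁, …, p₅ be five points of the real projective plane ℙ²(ℝ) such that no three of them are collinear. Then any two nonzero homogeneous polynomials of degree 2 in three variables over ℝ vanishing at all five points are scalar multiples of each other; equivalently, the ℝ-subspace of the space of homogeneous polynomials of degree 2 consisting of those vanishing at p₁, …, p₅ (together with 0) has dimension 1. (Uniqueness of the conic through five points in general position.) -/
import Mathlib

open MvPolynomial Finsupp

lemma fne {m m' : Fin 3 →₀ ℕ} (i : Fin 3) (h : m i ≠ m' i) : m ≠ m' := fun e => h (by rw [e])

lemma classify (d : Fin 3 →₀ ℕ) (h : Finsupp.weight (1 : Fin 3 → ℕ) d = 2) :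
    d = Finsupp.single 0 2 ∨ d = Finsupp.single 1 2 ∨ d = Finsupp.single 2 2 ∨
    d = Finsupp.single 0 1 + Finsupp.single 1 1 ∨
    d = Finsupp.single 0 1 + Finsupp.single 2 1 ∨
    d = Finsupp.single 1 1 + Finsupp.single 2 1 := by
  have h2 : d 0 + d 1 + d 2 = 2 := by
    rw [Finsupp.weight_apply, Finsupp.sum_fintype] at h
    · simpa [Fin.sum_univ_three] using h
    · simp
  have hd : ∀ a b c : ℕ, d 0 = a → d 1 = b → d 2 = c →
      d = Finsupp.single 0 a + Finsupp.single 1 b + Finsupp.single 2 c := by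
    intro a b c h0 h1 h2
    ext i; fin_cases i <;> simp [Finsupp.single_apply, ← h0, ← h1, ← h2]
  have b0 : d 0 ≤ 2 := by omega
  have b1 : d 1 ≤ 2 := by omega
  have b2 : d 2 ≤ 2 := by omega
  interval_cases h0 : d 0 <;> interval_cases h1 : d 1 <;> interval_cases hh2 : d 2 <;>
    first
      | omega
      | (rw [hd _ _ _ rfl rfl rfl]; simp; try tauto)

lemma eval_homog2 (f : MvPolynomial (Fin 3) ℝ) (hf : f.IsHomogeneous 2) (u : Fin 3 → ℝ) :
    eval u f = coeff (Finsupp.single 0 2) f * (u 0)^2 + coeff (Finsupp.single 1 2) f * (u 1)^2 +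
      coeff (Finsupp.single 2 2) f * (u 2)^2 +
      coeff (Finsupp.single 0 1 + Finsupp.single 1 1) f * (u 0 * u 1) +
      coeff (Finsupp.single 0 1 + Finsupp.single 2 1) f * (u 0 * u 2) +
      coeff (Finsupp.single 1 1 + Finsupp.single 2 1) f * (u 1 * u 2) := by
  classical
  set S : Finset (Fin 3 →₀ ℕ) := {Finsupp.single 0 2, Finsupp.single 1 2, Finsupp.single 2 2,
    Finsupp.single 0 1 + Finsupp.single 1 1, Finsupp.single 0 1 + Finsupp.single 2 1,
    Finsupp.single 1 1 + Finsupp.single 2 1} with hS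
  have hsub : f.support ⊆ S := by
    intro m hm
    have h := hf (MvPolynomial.mem_support_iff.mp hm)
    rcases classify m h with h | h | h | h | h | h <;> simp [hS, h]
  rw [eval_eq' u f, Finset.sum_subset hsub (by
    intro m _ hm
    rw [MvPolynomial.notMem_support_iff.mp hm, zero_mul])]
  have n1 : (Finsupp.single (0:Fin 3) 2) ≠ Finsupp.single 1 2 := fne 0 (by simp)
  have n2 : (Finsupp.single (0:Fin 3) 2) ≠ Finsupp.single 2 2 := fne 0 (by simp)
  have n3 : (Finsupp.single (0:Fin 3) 2) ≠ Finsupp.single 0 1 + Finsupp.single 1 1 := fne 0 (by simp)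
  have n4 : (Finsupp.single (0:Fin 3) 2) ≠ Finsupp.single 0 1 + Finsupp.single 2 1 := fne 0 (by simp)
  have n5 : (Finsupp.single (0:Fin 3) 2) ≠ Finsupp.single 1 1 + Finsupp.single 2 1 := fne 0 (by simp)
  have n6 : (Finsupp.single (1:Fin 3) 2) ≠ Finsupp.single 2 2 := fne 1 (by simp)
  have n7 : (Finsupp.single (1:Fin 3) 2) ≠ Finsupp.single 0 1 + Finsupp.single 1 1 := fne 1 (by simp)
  have n8 : (Finsupp.single (1:Fin 3) 2) ≠ Finsupp.single 0 1 + Finsupp.single 2 1 := fne 1 (by simp)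
  have n9 : (Finsupp.single (1:Fin 3) 2) ≠ Finsupp.single 1 1 + Finsupp.single 2 1 := fne 1 (by simp)
  have n10 : (Finsupp.single (2:Fin 3) 2) ≠ Finsupp.single 0 1 + Finsupp.single 1 1 := fne 2 (by simp)
  have n11 : (Finsupp.single (2:Fin 3) 2) ≠ Finsupp.single 0 1 + Finsupp.single 2 1 := fne 2 (by simp)
  have n12 : (Finsupp.single (2:Fin 3) 2) ≠ Finsupp.single 1 1 + Finsupp.single 2 1 := fne 2 (by simp)
  have n13 : (Finsupp.single (0:Fin 3) 1 + Finsupp.single 1 1) ≠ Finsupp.single 0 1 + Finsupp.single 2 1 := fne 1 (by simp)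
  have n14 : (Finsupp.single (0:Fin 3) 1 + Finsupp.single 1 1) ≠ Finsupp.single 1 1 + Finsupp.single 2 1 := fne 0 (by simp)
  have n15 : (Finsupp.single (0:Fin 3) 1 + Finsupp.single 2 1) ≠ Finsupp.single 1 1 + Finsupp.single 2 1 := fne 0 (by simp)
  rw [hS]
  rw [Finset.sum_insert (by simp [n1, n2, n3, n4, n5]),
      Finset.sum_insert (by simp [n6, n7, n8, n9]),
      Finset.sum_insert (by simp [n10, n11, n12]),
      Finset.sum_insert (by simp [n13, n14]),
      Finset.sum_insert (by simp [n15]),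
      Finset.sum_singleton]
  simp [Fin.prod_univ_three, Finsupp.single_apply]
  ring

lemma not_li' {x y z : Fin 3 → ℝ} (a b c : ℝ) (hc : c ≠ 0)
    (h : a • x + b • y + c • z = 0) : ¬ LinearIndependent ℝ ![x, y, z] := by
  intro H
  have h2 := Fintype.linearIndependent_iff.mp H ![a, b, c] (by
    simpa [Fin.sum_univ_three] using h)
  exact hc (h2 2)

lemma not_li {x y z : Fin 3 → ℝ} (s t : ℝ) (h : z = s • x + t • y) :
    ¬ LinearIndependent ℝ ![x, y, z] := by
  intro H
  have h2 := Fintype.linearIndependent_iff.mp H ![s, t, -1] ?_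
  · simpa using h2 2
  · simp only [Fin.sum_univ_three, Matrix.cons_val_zero, Matrix.cons_val_one, Matrix.head_cons,
      Matrix.cons_val_two, Matrix.tail_cons, h]
    module

/-- `f` vanishes at the projective point `p`, i.e. `f` vanishes at every
representative vector of `p`. -/
def ProjVanish {K : Type*} [Field K] (f : MvPolynomial (Fin 3) K)
    (p : Projectivization K (Fin 3 → K)) : Prop :=
  ∀ (v : Fin 3 → K) (hv : v ≠ 0), Projectivization.mk K v hv = p →
    MvPolynomial.eval v f = 0

/-- If `p₁, …, p₅` are five points of the real projective plane no three of
which are collinear, then any two nonzero homogeneous polynomials of degree 2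
in three variables over ℝ vanishing at all five points are scalar multiples of
each other: the conic through five points in general position is unique. -/
theorem conic_through_five_general_points_unique
    (p : Fin 5 → Projectivization ℝ (Fin 3 → ℝ))
    (hgen : ∀ i j k : Fin 5, i ≠ j → i ≠ k → j ≠ k →
      LinearIndependent ℝ ![(p i).rep, (p j).rep, (p k).rep])
    (f g : MvPolynomial (Fin 3) ℝ)
    (hf0 : f ≠ 0) (hf : f.IsHomogeneous 2) (hfv : ∀ i : Fin 5, ProjVanish f (p i))
    (hg0 : g ≠ 0) (hg : g.IsHomogeneous 2) (hgv : ∀ i : Fin 5, ProjVanish g (p i)) :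
    ∃ c : ℝ, g = c • f := by
  classical
  set v : Fin 5 → (Fin 3 → ℝ) := fun i => (p i).rep with hv
  have hfe : ∀ i, eval (v i) f = 0 := fun i =>
    hfv i (v i) ((p i).rep_nonzero) (Projectivization.mk_rep _)
  have hge : ∀ i, eval (v i) g = 0 := fun i =>
    hgv i (v i) ((p i).rep_nonzero) (Projectivization.mk_rep _)
  have hEf := eval_homog2 f hf
  have hEg := eval_homog2 g hg
  have hli : LinearIndependent ℝ ![v 0, v 1, v 2] := hgen 0 1 2 (by decide) (by decide) (by decide)
  have hcard : Fintype.card (Fin 3) = Module.finrank ℝ (Fin 3 → ℝ) := by simp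
  let B := basisOfLinearIndependentOfCardEqFinrank hli hcard
  have hB : ∀ u : Fin 3 → ℝ, u = B.repr u 0 • v 0 + B.repr u 1 • v 1 + B.repr u 2 • v 2 := by
    intro u
    have h := B.sum_repr u
    rw [Fin.sum_univ_three] at h
    have hBc : ∀ i, B i = ![v 0, v 1, v 2] i := fun i => by
      rw [coe_basisOfLinearIndependentOfCardEqFinrank]
    rw [hBc 0, hBc 1, hBc 2] at h
    simpa using h.symm
  set t : Fin 3 → ℝ := fun i => B.repr (v 3) i with ht
  set s : Fin 3 → ℝ := fun i => B.repr (v 4) i with hs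
  have hB3 : v 3 = t 0 • v 0 + t 1 • v 1 + t 2 • v 2 := hB (v 3)
  have hB4 : v 4 = s 0 • v 0 + s 1 • v 1 + s 2 • v 2 := hB (v 4)
  have ht0 : t 0 ≠ 0 := by
    intro h0
    exact not_li (t 1) (t 2) (by show v 3 = t 1 • v 1 + t 2 • v 2; rw [hB3, h0]; module)
      (hgen 1 2 3 (by decide) (by decide) (by decide))
  have ht1 : t 1 ≠ 0 := by
    intro h0
    exact not_li (t 0) (t 2) (by show v 3 = t 0 • v 0 + t 2 • v 2; rw [hB3, h0]; module)
      (hgen 0 2 3 (by decide) (by decide) (by decide))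
  have ht2 : t 2 ≠ 0 := by
    intro h0
    exact not_li (t 0) (t 1) (by show v 3 = t 0 • v 0 + t 1 • v 1; rw [hB3, h0]; module)
      (hgen 0 1 3 (by decide) (by decide) (by decide))
  have hs2 : s 2 ≠ 0 := by
    intro h0
    exact not_li (s 0) (s 1) (by show v 4 = s 0 • v 0 + s 1 • v 1; rw [hB4, h0]; module)
      (hgen 0 1 4 (by decide) (by decide) (by decide))
  set α : ℝ := s 0 / t 0 with hα
  set β : ℝ := s 1 / t 1 with hβ
  set γ : ℝ := s 2 / t 2 with hγ
  have hγ0 : γ ≠ 0 := div_ne_zero hs2 ht2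
  have hαβ : α ≠ β := by
    intro h0
    rw [hα, hβ] at h0
    have hcross : s 0 * t 1 = s 1 * t 0 := (div_eq_div_iff ht0 ht1).mp h0
    refine not_li' (s 0 * t 2 - s 2 * t 0) (-(s 0)) (t 0) ht0 ?_
      (hgen 2 3 4 (by decide) (by decide) (by decide))
    show (s 0 * t 2 - s 2 * t 0) • v 2 + (-(s 0)) • v 3 + t 0 • v 4 = 0
    rw [hB3, hB4]
    funext i
    simp only [Pi.add_apply, Pi.smul_apply, Pi.zero_apply, smul_eq_mul]
    linear_combination (-(v 1 i)) * hcross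
  set w0 : Fin 3 → ℝ := t 0 • v 0 with hw0
  set w1 : Fin 3 → ℝ := t 1 • v 1 with hw1
  set w2 : Fin 3 → ℝ := t 2 • v 2 with hw2
  -- vanishing at the scaled basis vectors
  have hwf : ∀ (c : ℝ) (j : Fin 5), eval (v j) f = 0 → eval (c • v j) f = 0 := by
    intro c j hj
    rw [hEf] at hj ⊢
    simp only [Pi.smul_apply, smul_eq_mul]
    linear_combination c^2 * hj
  have hwg : ∀ (c : ℝ) (j : Fin 5), eval (v j) g = 0 → eval (c • v j) g = 0 := by
    intro c j hj
    rw [hEg] at hj ⊢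
    simp only [Pi.smul_apply, smul_eq_mul]
    linear_combination c^2 * hj
  have hw0f : eval w0 f = 0 := hwf _ 0 (hfe 0)
  have hw1f : eval w1 f = 0 := hwf _ 1 (hfe 1)
  have hw2f : eval w2 f = 0 := hwf _ 2 (hfe 2)
  have hw0g : eval w0 g = 0 := hwg _ 0 (hge 0)
  have hw1g : eval w1 g = 0 := hwg _ 1 (hge 1)
  have hw2g : eval w2 g = 0 := hwg _ 2 (hge 2)
  set Pf : ℝ := eval (w0 + w1) f with hPf
  set Qf : ℝ := eval (w0 + w2) f with hQf
  set Rf : ℝ := eval (w1 + w2) f with hRf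
  set Pg : ℝ := eval (w0 + w1) g with hPg
  set Qg : ℝ := eval (w0 + w2) g with hQg
  set Rg : ℝ := eval (w1 + w2) g with hRg
  have hkeyf : ∀ x y z : ℝ, eval (x • w0 + y • w1 + z • w2) f =
      x * y * Pf + x * z * Qf + y * z * Rf := by
    intro x y z
    have h0 := hw0f; have h1 := hw1f; have h2 := hw2f
    rw [hEf] at h0 h1 h2
    rw [hPf, hQf, hRf, hEf, hEf, hEf, hEf]
    simp only [Pi.add_apply, Pi.smul_apply, smul_eq_mul]
    linear_combination (x^2 - x*y - x*z) * h0 + (y^2 - x*y - y*z) * h1 + (z^2 - x*z - y*z) * h2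
  have hkeyg : ∀ x y z : ℝ, eval (x • w0 + y • w1 + z • w2) g =
      x * y * Pg + x * z * Qg + y * z * Rg := by
    intro x y z
    have h0 := hw0g; have h1 := hw1g; have h2 := hw2g
    rw [hEg] at h0 h1 h2
    rw [hPg, hQg, hRg, hEg, hEg, hEg, hEg]
    simp only [Pi.add_apply, Pi.smul_apply, smul_eq_mul]
    linear_combination (x^2 - x*y - x*z) * h0 + (y^2 - x*y - y*z) * h1 + (z^2 - x*z - y*z) * h2
  -- express any vector in the w basis
  have hcomb : ∀ u : Fin 3 → ℝ, ∃ x y z : ℝ, u = x • w0 + y • w1 + z • w2 := by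
    intro u
    refine ⟨B.repr u 0 / t 0, B.repr u 1 / t 1, B.repr u 2 / t 2, ?_⟩
    rw [hw0, hw1, hw2, smul_smul, smul_smul, smul_smul,
      div_mul_cancel₀ _ ht0, div_mul_cancel₀ _ ht1, div_mul_cancel₀ _ ht2]
    exact hB u
  -- the two linear conditions
  have hv3w : v 3 = (1:ℝ) • w0 + (1:ℝ) • w1 + (1:ℝ) • w2 := by
    rw [hB3, hw0, hw1, hw2]; module
  have hv4w : v 4 = α • w0 + β • w1 + γ • w2 := by
    rw [hB4, hw0, hw1, hw2, smul_smul, smul_smul, smul_smul, hα, hβ, hγ,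
      div_mul_cancel₀ _ ht0, div_mul_cancel₀ _ ht1, div_mul_cancel₀ _ ht2]
  have eq1f : Pf + Qf + Rf = 0 := by
    have h := hfe 3
    rw [hv3w, hkeyf] at h
    linarith
  have eq2f : α * β * Pf + α * γ * Qf + β * γ * Rf = 0 := by
    have h := hfe 4
    rw [hv4w, hkeyf] at h
    linarith
  have eq1g : Pg + Qg + Rg = 0 := by
    have h := hge 3
    rw [hv3w, hkeyg] at h
    linarith
  have eq2g : α * β * Pg + α * γ * Qg + β * γ * Rg = 0 := by
    have h := hge 4
    rw [hv4w, hkeyg] at h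
    linarith
  -- eliminate
  have E1f : β * (α - γ) * Pf + γ * (α - β) * Qf = 0 := by linear_combination eq2f - β * γ * eq1f
  have E2f : α * (β - γ) * Pf + γ * (β - α) * Rf = 0 := by linear_combination eq2f - α * γ * eq1f
  have E1g : β * (α - γ) * Pg + γ * (α - β) * Qg = 0 := by linear_combination eq2g - β * γ * eq1g
  have E2g : α * (β - γ) * Pg + γ * (β - α) * Rg = 0 := by linear_combination eq2g - α * γ * eq1g
  have hne : γ * (α - β) ≠ 0 := mul_ne_zero hγ0 (sub_ne_zero.mpr hαβ)
  -- Pf ≠ 0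
  have hPf0 : Pf ≠ 0 := by
    intro h0
    have hQ : Qf = 0 := by
      have : γ * (α - β) * Qf = 0 := by linear_combination E1f - β * (α - γ) * h0
      exact (mul_eq_zero.mp this).resolve_left hne
    have hR : Rf = 0 := by
      have hne' : γ * (β - α) ≠ 0 := mul_ne_zero hγ0 (sub_ne_zero.mpr (Ne.symm hαβ))
      have : γ * (β - α) * Rf = 0 := by linear_combination E2f - α * (β - γ) * h0
      exact (mul_eq_zero.mp this).resolve_left hne'
    apply hf0
    apply MvPolynomial.funext
    intro u
    obtain ⟨x, y, z, hu⟩ := hcomb u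
    rw [hu, hkeyf, h0, hQ, hR, map_zero]
    ring
  refine ⟨Pg / Pf, ?_⟩
  have hQ' : Qg * Pf = Qf * Pg := by
    refine mul_left_cancel₀ hne ?_
    linear_combination Pf * E1g - Pg * E1f
  have hR' : Rg * Pf = Rf * Pg := by
    have hne' : γ * (β - α) ≠ 0 := mul_ne_zero hγ0 (sub_ne_zero.mpr (Ne.symm hαβ))
    refine mul_left_cancel₀ hne' ?_
    linear_combination Pf * E2g - Pg * E2f
  apply MvPolynomial.funext
  intro u
  rw [MvPolynomial.smul_eval]
  obtain ⟨x, y, z, hu⟩ := hcomb u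
  rw [hu, hkeyf, hkeyg]
  field_simp
  linear_combination x * z * hQ' + y * z * hR'
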